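/- The minimum group congruence quotient of the semigroup Iℕ∞ of cofinite partial isometries of ℕ is isomorphic to ℤ(+): two cofinite partial isometries α, β of ℕ satisfy αe = βe for some idempotent e if and only if α and β eventually agree and act as the same translation n ↦ n + k. -/
import Mathlib


/-- Composition of partial selfmaps of ℕ: apply `f` first, then `g`. -/
def PComp (f g : ℕ → Option ℕ) : ℕ → Option ℕ := fun n => (f n).bind g

/-- The identity partial map on ℕ. -/
def pid : ℕ → Option ℕ := fun n => some n

/-- `f` is injective where defined (a partial bijection). -/
def PInj (f : ℕ → Option ℕ) : Prop := ∀ a b c, f a = some c → f b = some c → a = b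

/-- Domain of a partial map. -/
def pdom (f : ℕ → Option ℕ) : Set ℕ := {n | f n ≠ none}

/-- Range of a partial map. -/
def pran (f : ℕ → Option ℕ) : Set ℕ := {m | ∃ n, f n = some m}

/-- `g` is the inverse partial map of `f`. -/
def PInv (f g : ℕ → Option ℕ) : Prop := ∀ a b, f a = some b ↔ g b = some a

/-- Domain and range are cofinite. -/
def PCofinite (f : ℕ → Option ℕ) : Prop := (pdom f)ᶜ.Finite ∧ (pran f)ᶜ.Finite

/-- `f` is strictly increasing on its domain. -/
def PMono (f : ℕ → Option ℕ) : Prop :=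
  ∀ a b c d, f a = some c → f b = some d → a < b → c < d

/-- The monoid `I∞↗(ℕ)`: cofinite monotone injective partial selfmaps of ℕ. -/
def InIoo (f : ℕ → Option ℕ) : Prop := PInj f ∧ PCofinite f ∧ PMono f

/-- The monoid `I∞⇗(ℕ)`: cofinite almost monotone injective partial selfmaps of ℕ. -/
def IAlmost (f : ℕ → Option ℕ) : Prop :=
  PInj f ∧ PCofinite f ∧ ∃ A : Set ℕ, A.Finite ∧
    ∀ a b c d, a ∉ A → b ∉ A → f a = some c → f b = some d → a < b → c < d

/-- The monoid `Iℕ∞`: cofinite partial isometries of ℕ. -/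
def Isom (f : ℕ → Option ℕ) : Prop :=
  PInj f ∧ PCofinite f ∧ ∀ a b c d, f a = some c → f b = some d →
    |(c : ℤ) - (d : ℤ)| = |(a : ℤ) - (b : ℤ)|

/-- The shift `n ↦ n + 1`, defined everywhere. -/
def alphaShift : ℕ → Option ℕ := fun n => some (n + 1)

/-- The inverse partial shift `n ↦ n - 1`, undefined at the least element of ℕ. -/
def betaShift : ℕ → Option ℕ := fun n => if n = 0 then none else some (n - 1)

/-- Iterated composition power of a partial map. -/
def PPow (f : ℕ → Option ℕ) : ℕ → ℕ → Option ℕ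
  | 0 => pid
  | n + 1 => PComp (PPow f n) f

def ETrans (a : ℕ → Option ℕ) (k : ℤ) : Prop :=
  ∃ N : ℕ, ∀ n ≥ N, ∃ c, a n = some c ∧ (c : ℤ) = (n : ℤ) + k

lemma dom_bound {a : ℕ → Option ℕ} (h : (pdom a)ᶜ.Finite) :
    ∃ N : ℕ, ∀ n ≥ N, ∃ c, a n = some c := by
  obtain ⟨N, hN⟩ := h.bddAbove
  refine ⟨N + 1, fun n hn => ?_⟩
  have hmem : n ∈ pdom a := by
    by_contra hc
    exact absurd (hN hc) (by omega)
  cases hcase : a n with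
  | none => exact absurd hcase hmem
  | some c => exact ⟨c, rfl⟩

lemma isom_trans {a : ℕ → Option ℕ} (ha : Isom a) : ∃ k, ETrans a k := by
  obtain ⟨hinj, ⟨hd, hr⟩, hiso⟩ := ha
  obtain ⟨N, hN⟩ := dom_bound hd
  obtain ⟨cp, hcp⟩ := hN N le_rfl
  refine ⟨(cp : ℤ) - N, N, fun n hn => ?_⟩
  obtain ⟨cn, hcn⟩ := hN n hn
  refine ⟨cn, hcn, ?_⟩
  have h1 : |(cn : ℤ) - cp| = |(n : ℤ) - N| := hiso n N cn cp hcn hcp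
  -- big m
  set m : ℕ := N + cp + n + 1 with hm
  obtain ⟨cm, hcm⟩ := hN m (by omega)
  have h2 : |(cm : ℤ) - cp| = |(m : ℤ) - N| := hiso m N cm cp hcm hcp
  have h3 : |(cm : ℤ) - cn| = |(m : ℤ) - n| := hiso m n cm cn hcm hcn
  have hmN : (m : ℤ) = (N : ℤ) + cp + n + 1 := by push_cast [hm]; ring
  have hcm0 : (0:ℤ) ≤ cm := Int.natCast_nonneg cm
  have hcn0 : (0:ℤ) ≤ cn := Int.natCast_nonneg cn
  have hnN : (N:ℤ) ≤ n := by exact_mod_cast hn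
  have a1 := abs_cases ((cn:ℤ) - cp)
  have a2 := abs_cases ((cm:ℤ) - cp)
  have a3 := abs_cases ((cm:ℤ) - cn)
  have b1 := abs_cases ((n:ℤ) - N)
  have b2 := abs_cases ((m:ℤ) - N)
  have b3 := abs_cases ((m:ℤ) - n)
  omega

lemma etrans_unique {a : ℕ → Option ℕ} {k k' : ℤ} (h : ETrans a k) (h' : ETrans a k') :
    k = k' := by
  obtain ⟨N, hN⟩ := h; obtain ⟨N', hN'⟩ := h'
  obtain ⟨c, hc, hck⟩ := hN (max N N') (le_max_left _ _)
  obtain ⟨c', hc', hck'⟩ := hN' (max N N') (le_max_right _ _)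
  rw [hc] at hc'
  injection hc' with hcc
  omega

open Classical in
noncomputable def Fk (a : ℕ → Option ℕ) : ℤ :=
  if h : ∃ k, ETrans a k then h.choose else 0

lemma Fk_eq {a : ℕ → Option ℕ} {k : ℤ} (h : ETrans a k) : Fk a = k := by
  have he : ∃ k, ETrans a k := ⟨k, h⟩
  rw [Fk]
  rw [dif_pos he]
  exact etrans_unique he.choose_spec h

lemma idem_id {e : ℕ → Option ℕ} (hinj : PInj e) (hid : PComp e e = e) :
    ∀ n m, e n = some m → e n = some n := by
  intro n m h
  have h2 := congrFun hid n
  rw [PComp, h, Option.bind_some] at h2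
  rw [hinj m n m h2 h] at h
  exact h

lemma etrans_comp {a b : ℕ → Option ℕ} {k₁ k₂ : ℤ}
    (ha : ETrans a k₁) (hb : ETrans b k₂) : ETrans (PComp a b) (k₁ + k₂) := by
  obtain ⟨N₁, h₁⟩ := ha; obtain ⟨N₂, h₂⟩ := hb
  refine ⟨N₁ + N₂ + k₁.natAbs, fun n hn => ?_⟩
  obtain ⟨c, hc, hck⟩ := h₁ n (by omega)
  have hcN : c ≥ N₂ := by omega
  obtain ⟨d, hd, hdk⟩ := h₂ c hcN
  refine ⟨d, ?_, by omega⟩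
  rw [PComp, hc]
  exact hd

def tr (k : ℤ) : ℕ → Option ℕ := fun n => if 0 ≤ (n:ℤ) + k then some ((n:ℤ)+k).toNat else none

lemma tr_some {k : ℤ} {n c : ℕ} : tr k n = some c ↔ (c:ℤ) = (n:ℤ) + k := by
  rw [tr]
  split_ifs with h
  · constructor
    · intro hh; injection hh with hh; omega
    · intro hh; congr 1; omega
  · constructor
    · intro hh; exact absurd hh (by simp)
    · intro hh; omega

lemma tr_isom (k : ℤ) : Isom (tr k) := by
  refine ⟨fun x y c hx hy => ?_, ⟨?_, ?_⟩, fun x y c d hx hy => ?_⟩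
  · rw [tr_some] at hx hy; omega
  · apply Set.Finite.subset (Set.finite_Iio k.natAbs)
    intro n hn
    simp only [Set.mem_compl_iff, pdom, Set.mem_setOf_eq, not_not] at hn
    simp only [Set.mem_Iio]
    by_contra hc
    have : tr k n = some ((n:ℤ)+k).toNat := by
      rw [tr, if_pos (by omega)]
    rw [hn] at this; exact absurd this (by simp)
  · apply Set.Finite.subset (Set.finite_Iio k.toNat)
    intro c hc
    simp only [Set.mem_compl_iff, pran, Set.mem_setOf_eq] at hc
    simp only [Set.mem_Iio]
    by_contra hcc
    exact hc ⟨((c:ℤ) - k).toNat, tr_some.mpr (by omega)⟩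
  · rw [tr_some] at hx hy
    have : (c:ℤ) - d = (x:ℤ) - y := by omega
    rw [this]

lemma tr_etrans (k : ℤ) : ETrans (tr k) k :=
  ⟨k.natAbs, fun n hn => ⟨((n:ℤ)+k).toNat, tr_some.mpr (by omega), by omega⟩⟩

lemma main_iff {a b : ℕ → Option ℕ} (ha : Isom a) (hb : Isom b) :
    (∃ e, Isom e ∧ PComp e e = e ∧ PComp a e = PComp b e) ↔
      ∃ k : ℤ, ∃ N : ℕ, ∀ n ≥ N,
        (∃ c, a n = some c ∧ (c : ℤ) = (n : ℤ) + k) ∧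
        (∃ c, b n = some c ∧ (c : ℤ) = (n : ℤ) + k) := by
  constructor
  · rintro ⟨e, he, hee, hab⟩
    obtain ⟨k₁, N₁, h₁⟩ := isom_trans ha
    obtain ⟨k₂, N₂, h₂⟩ := isom_trans hb
    obtain ⟨M, hM⟩ := dom_bound he.2.1.1
    have hMid : ∀ n ≥ M, e n = some n := fun n hn => by
      obtain ⟨c, hc⟩ := hM n hn
      exact idem_id he.1 hee n c hc
    set n := N₁ + N₂ + M + k₁.natAbs + k₂.natAbs with hn
    obtain ⟨c₁, hc₁, hk₁⟩ := h₁ n (by omega)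
    obtain ⟨c₂, hc₂, hk₂⟩ := h₂ n (by omega)
    have hc₁M : c₁ ≥ M := by omega
    have hc₂M : c₂ ≥ M := by omega
    have heq := congrFun hab n
    rw [PComp, PComp] at heq
    rw [hc₁, hc₂, Option.bind_some, Option.bind_some,
        hMid c₁ hc₁M, hMid c₂ hc₂M] at heq
    injection heq with heq
    have hk : k₁ = k₂ := by omega
    refine ⟨k₁, max N₁ N₂, fun m hm => ⟨h₁ m (le_trans (le_max_left _ _) hm), ?_⟩⟩
    rw [hk]; exact h₂ m (le_trans (le_max_right _ _) hm)
  · rintro ⟨k, N, h⟩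
    classical
    set V : Finset ℕ := (Finset.range N).biUnion
      (fun n => (a n).toFinset ∪ (b n).toFinset) with hV
    set M := V.sup id + 1 with hM
    have hVlt : ∀ c ∈ V, c < M := fun c hc => by
      have := Finset.le_sup (f := id) hc; simp at this; omega
    set e : ℕ → Option ℕ := fun n => if M ≤ n then some n else none with he
    have hesome : ∀ n c, e n = some c → c = n ∧ M ≤ n := by
      intro n c hc
      rw [he] at hc; dsimp only at hc
      split_ifs at hc with hMn
      injection hc with hc; exact ⟨hc.symm, hMn⟩
    have heid : ∀ n, M ≤ n → e n = some n := by
      intro n hn; rw [he]; dsimp only; rw [if_pos hn]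
    have henone : ∀ n, n < M → e n = none := by
      intro n hn; rw [he]; dsimp only; rw [if_neg (by omega)]
    refine ⟨e, ⟨?_, ⟨?_, ?_⟩, ?_⟩, ?_, ?_⟩
    · intro x y c hx hy
      obtain ⟨hx1, _⟩ := hesome x c hx; obtain ⟨hy1, _⟩ := hesome y c hy; omega
    · apply Set.Finite.subset (Set.finite_Iio M)
      intro x hx
      simp only [Set.mem_compl_iff, pdom, Set.mem_setOf_eq, not_not] at hx
      simp only [Set.mem_Iio]
      by_contra hc
      rw [heid x (by omega)] at hx; exact absurd hx (by simp)
    · apply Set.Finite.subset (Set.finite_Iio M)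
      intro x hx
      simp only [Set.mem_compl_iff, pran, Set.mem_setOf_eq] at hx
      simp only [Set.mem_Iio]
      by_contra hc
      exact hx ⟨x, heid x (by omega)⟩
    · intro x y c d hx hy
      obtain ⟨hx1, _⟩ := hesome x c hx; obtain ⟨hy1, _⟩ := hesome y d hy
      rw [hx1, hy1]
    · funext x
      show (e x).bind e = e x
      by_cases hx : M ≤ x
      · rw [heid x hx, Option.bind_some, heid x hx]
      · rw [henone x (by omega)]; rfl
    · funext m
      show (a m).bind e = (b m).bind e
      by_cases hm : N ≤ m
      · obtain ⟨⟨c, hc, hck⟩, ⟨c', hc', hck'⟩⟩ := h m hm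
        have hcc : c = c' := by omega
        rw [hc, hc', hcc]
      · have hla : (a m).bind e = none := by
          cases hca : a m with
          | none => rfl
          | some c =>
            rw [Option.bind_some]
            apply henone
            apply hVlt
            rw [hV]
            exact Finset.mem_biUnion.mpr ⟨m, Finset.mem_range.mpr (by omega),
              Finset.mem_union_left _ (Option.mem_toFinset.mpr hca)⟩
        have hlb : (b m).bind e = none := by
          cases hcb : b m with
          | none => rfl
          | some c =>
            rw [Option.bind_some]
            apply henone
            apply hVlt
            rw [hV]
            exact Finset.mem_biUnion.mpr ⟨m, Finset.mem_range.mpr (by omega),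
              Finset.mem_union_right _ (Option.mem_toFinset.mpr hcb)⟩
        rw [hla, hlb]

/-- The minimum group congruence quotient of `Iℕ∞` is isomorphic to `ℤ(+)`:
two cofinite partial isometries satisfy `αe = βe` for some idempotent `e` iff they
eventually agree and act as the same translation `n ↦ n + k`. -/
theorem stmt15 :
    (∀ a b : ℕ → Option ℕ, Isom a → Isom b →
      ((∃ e, Isom e ∧ PComp e e = e ∧ PComp a e = PComp b e) ↔
        ∃ k : ℤ, ∃ N : ℕ, ∀ n ≥ N,
          (∃ c, a n = some c ∧ (c : ℤ) = (n : ℤ) + k) ∧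
          (∃ c, b n = some c ∧ (c : ℤ) = (n : ℤ) + k))) ∧
    ∃ F : (ℕ → Option ℕ) → ℤ,
      (∀ a b, Isom a → Isom b → F (PComp a b) = F a + F b) ∧
      (∀ a b, Isom a → Isom b →
        ((∃ e, Isom e ∧ PComp e e = e ∧ PComp a e = PComp b e) ↔ F a = F b)) ∧
      (∀ k : ℤ, ∃ a, Isom a ∧ F a = k) := by
  refine ⟨fun a b ha hb => main_iff ha hb, Fk, ?_, ?_, ?_⟩
  · intro a b ha hb
    obtain ⟨k₁, h₁⟩ := isom_trans ha
    obtain ⟨k₂, h₂⟩ := isom_trans hb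
    rw [Fk_eq h₁, Fk_eq h₂, Fk_eq (etrans_comp h₁ h₂)]
  · intro a b ha hb
    rw [main_iff ha hb]
    obtain ⟨k₁, h₁⟩ := isom_trans ha
    obtain ⟨k₂, h₂⟩ := isom_trans hb
    rw [Fk_eq h₁, Fk_eq h₂]
    constructor
    · rintro ⟨k, N, h⟩
      have ea : ETrans a k := ⟨N, fun n hn => (h n hn).1⟩
      have eb : ETrans b k := ⟨N, fun n hn => (h n hn).2⟩
      rw [etrans_unique h₁ ea, etrans_unique h₂ eb]
    · intro hk
      obtain ⟨N₁, hh₁⟩ := h₁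
      obtain ⟨N₂, hh₂⟩ := h₂
      refine ⟨k₁, max N₁ N₂, fun n hn => ⟨hh₁ n (le_trans (le_max_left _ _) hn), ?_⟩⟩
      rw [hk]
      exact hh₂ n (le_trans (le_max_right _ _) hn)
  · intro k
    exact ⟨tr k, tr_isom k, Fk_eq (tr_etrans k)⟩
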